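/- The Lebesgue measure of the set {(u,v) ∈ ℝ² : u < 0 ∧ v < 0 ∧ exp u + exp v > 1} equals π²/6. -/

import Mathlib

open Real MeasureTheory Set Filter

lemma amoeba_exp_integrable (c : ℝ) (hc : 1 ≤ c) :
    IntegrableOn (fun u : ℝ => exp (c * u)) (Iic (0:ℝ)) := by
  refine Integrable.mono (integrableOn_exp_Iic 0) ?_ ?_
  · exact (Real.continuous_exp.comp (continuous_const.mul continuous_id)).aestronglyMeasurable
  · filter_upwards [ae_restrict_mem measurableSet_Iic] with u hu
    simp only [Real.norm_eq_abs, abs_of_pos (exp_pos _)]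
    apply exp_le_exp.mpr
    nlinarith [mem_Iic.mp hu]

lemma amoeba_exp_integral (c : ℝ) (hc : 1 ≤ c) :
    ∫ u in Iic (0:ℝ), exp (c * u) = 1 / c := by
  have hc0 : (0:ℝ) < c := lt_of_lt_of_le one_pos hc
  have hderiv : ∀ x ∈ Iic (0:ℝ), HasDerivAt (fun u : ℝ => exp (c * u) / c) (exp (c * x)) x := by
    intro x _
    have h := ((hasDerivAt_id x).const_mul c).exp
    simpa [mul_comm, mul_div_assoc, mul_div_cancel_left₀ _ (ne_of_gt hc0)] using h.div_const c
  have htend : Tendsto (fun u : ℝ => exp (c * u) / c) atBot (nhds 0) := by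
    have h1 : Tendsto (fun u : ℝ => c * u) atBot atBot :=
      (tendsto_const_mul_atBot_of_pos hc0).mpr tendsto_id
    have := (Real.tendsto_exp_atBot.comp h1).div_const c
    simpa using this
  have := integral_Iic_of_hasDerivAt_of_tendsto' hderiv (amoeba_exp_integrable c hc) htend
  simpa using this

lemma amoeba_aux_integral (n : ℕ) :
    ∫⁻ u in Iio (0:ℝ), ENNReal.ofReal (exp u ^ (n + 1) / ((n : ℝ) + 1))
      = ENNReal.ofReal (1 / ((n : ℝ) + 1) ^ 2) := by
  set c : ℝ := (n:ℝ) + 1 with hcdef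
  have hc : 1 ≤ c := by rw [hcdef]; linarith [Nat.cast_nonneg (α := ℝ) n]
  have hc0 : (0:ℝ) < c := lt_of_lt_of_le one_pos hc
  have hpow : ∀ u : ℝ, exp u ^ (n + 1) = exp (c * u) := by
    intro u
    rw [← Real.exp_nat_mul]
    congr 1
    push_cast [hcdef]
    ring
  have hint : IntegrableOn (fun u : ℝ => exp (c * u) / c) (Iic (0:ℝ)) :=
    (amoeba_exp_integrable c hc).div_const c
  calc ∫⁻ u in Iio (0:ℝ), ENNReal.ofReal (exp u ^ (n + 1) / ((n : ℝ) + 1))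
      = ∫⁻ u in Iic (0:ℝ), ENNReal.ofReal (exp (c * u) / c) := by
        rw [setLIntegral_congr Iio_ae_eq_Iic]
        refine lintegral_congr fun u => by rw [hpow]
    _ = ENNReal.ofReal (∫ u in Iic (0:ℝ), exp (c * u) / c) := by
        rw [ofReal_integral_eq_lintegral_ofReal hint]
        filter_upwards with u
        positivity
    _ = ENNReal.ofReal (1 / ((n : ℝ) + 1) ^ 2) := by
        rw [integral_div, amoeba_exp_integral c hc]
        congr 1
        rw [hcdef]
        field_simp

lemma amoeba_sum_eq : ∑' n : ℕ, ENNReal.ofReal (1 / ((n : ℝ) + 1) ^ 2)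
    = ENNReal.ofReal (π ^ 2 / 6) := by
  have hsum : HasSum (fun n : ℕ => 1 / ((n : ℝ) + 1) ^ 2) (π ^ 2 / 6) := by
    have h0 : HasSum (fun n : ℕ => (1:ℝ) / ((n + 1 : ℕ) : ℝ) ^ 2) (π ^ 2 / 6) := by
      refine (hasSum_nat_add_iff (f := fun n : ℕ => (1:ℝ) / (n : ℝ) ^ 2) 1).mpr ?_
      simpa using hasSum_zeta_two
    refine h0.congr_fun fun n => by norm_num
  rw [← ENNReal.ofReal_tsum_of_nonneg (fun n => by positivity) hsum.summable, hsum.tsum_eq]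

theorem area_amoeba_negative_quadrant :
    volume {p : ℝ × ℝ | p.1 < 0 ∧ p.2 < 0 ∧ exp p.1 + exp p.2 > 1}
      = ENNReal.ofReal (π ^ 2 / 6) := by
  have hset : {p : ℝ × ℝ | p.1 < 0 ∧ p.2 < 0 ∧ exp p.1 + exp p.2 > 1}
      = regionBetween (fun u => log (1 - exp u)) (fun _ => (0:ℝ)) (Iio 0) := by
    ext ⟨u, v⟩
    simp only [regionBetween, mem_setOf_eq, mem_Iio, mem_Ioo]
    constructor
    · rintro ⟨hu, hv, h⟩
      have h1 : (0:ℝ) < 1 - exp u := by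
        have := Real.exp_lt_one_iff.mpr hu
        linarith
      exact ⟨hu, (Real.log_lt_iff_lt_exp h1).mpr (by linarith), hv⟩
    · rintro ⟨hu, hlog, hv⟩
      have h1 : (0:ℝ) < 1 - exp u := by
        have := Real.exp_lt_one_iff.mpr hu
        linarith
      have := (Real.log_lt_iff_lt_exp h1).mp hlog
      exact ⟨hu, hv, by linarith⟩
  have hf : AEMeasurable (fun u : ℝ => log (1 - exp u))
      ((volume : Measure ℝ).restrict (Iio 0)) :=
    (Real.measurable_log.comp (measurable_const.sub Real.measurable_exp)).aemeasurable
  have hg : AEMeasurable (fun _ : ℝ => (0:ℝ)) ((volume : Measure ℝ).restrict (Iio 0)) :=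
    measurable_const.aemeasurable
  rw [hset, Measure.volume_eq_prod ℝ ℝ, volume_regionBetween_eq_lintegral hf hg measurableSet_Iio]
  have key : ∀ u ∈ Iio (0:ℝ),
      ENNReal.ofReal (((fun _ : ℝ => (0:ℝ)) - fun u => log (1 - exp u)) u)
        = ∑' n : ℕ, ENNReal.ofReal (exp u ^ (n + 1) / ((n : ℝ) + 1)) := by
    intro u hu
    have hx : |exp u| < 1 := by
      rw [abs_of_pos (exp_pos u)]
      exact Real.exp_lt_one_iff.mpr hu
    have hs := Real.hasSum_pow_div_log_of_abs_lt_one hx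
    rw [Pi.sub_apply, zero_sub, ← hs.tsum_eq,
      ENNReal.ofReal_tsum_of_nonneg (fun n => by positivity) hs.summable]
  rw [setLIntegral_congr_fun measurableSet_Iio key,
    lintegral_tsum (f := fun (n : ℕ) (u : ℝ) => ENNReal.ofReal (exp u ^ (n + 1) / ((n : ℝ) + 1))) (fun n =>
      (((Real.continuous_exp.pow (n + 1)).div_const _).measurable.ennreal_ofReal).aemeasurable)]
  rw [tsum_congr amoeba_aux_integral, amoeba_sum_eq]
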